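/- Define φ(t) = g(t)·(1 + (2α)^{N−1} |g(t)|^{N(2α−1)})^{1/N} (that is, φ = g/g'). Then φ is differentiable on ℝ with φ'(t) = 1 + (2α − 1)·(2α)^{N−1}|g(t)|^{N(2α−1)} / (1 + (2α)^{N−1}|g(t)|^{N(2α−1)}) for every t; consequently 1 ≤ φ'(t) ≤ 2α for all t ∈ ℝ and |φ(t)| ≤ 2α|t| for all t ∈ ℝ. -/

import Mathlib

open Real Filter Set Topology

theorem g_test_function_estimates (N : ℕ) (hN : 2 ≤ N) (α : ℝ) (hα : 1 / 2 < α)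
    (g : ℝ → ℝ) (hg_diff : Differentiable ℝ g) (hg_zero : g 0 = 0)
    (hg_odd : ∀ t : ℝ, g (-t) = -g t)
    (hg_deriv : ∀ t : ℝ, deriv g t =
      (1 + (2 * α) ^ ((N : ℝ) - 1) * |g t| ^ ((N : ℝ) * (2 * α - 1))) ^ (-(1 / (N : ℝ))))
    (φ : ℝ → ℝ) (hφ : ∀ t : ℝ, φ t =
      g t * (1 + (2 * α) ^ ((N : ℝ) - 1) * |g t| ^ ((N : ℝ) * (2 * α - 1))) ^ ((1 : ℝ) / (N : ℝ)))
    : (∀ t : ℝ, HasDerivAt φ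
        (1 + (2 * α - 1) * (2 * α) ^ ((N : ℝ) - 1) * |g t| ^ ((N : ℝ) * (2 * α - 1)) /
          (1 + (2 * α) ^ ((N : ℝ) - 1) * |g t| ^ ((N : ℝ) * (2 * α - 1)))) t) ∧
      (∀ t : ℝ, 1 ≤ deriv φ t ∧ deriv φ t ≤ 2 * α) ∧
      (∀ t : ℝ, |φ t| ≤ 2 * α * |t|) := by
  set c : ℝ := (2 * α) ^ ((N : ℝ) - 1) with hc_def
  set p : ℝ := (N : ℝ) * (2 * α - 1) with hp_def
  have hNpos : (0 : ℝ) < N := by positivity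
  have hc : 0 < c := Real.rpow_pos_of_pos (by linarith) _
  have hp : 0 < p := mul_pos hNpos (by linarith)
  have hA : ∀ t : ℝ, 0 < 1 + c * |g t| ^ p := by
    intro t
    have : 0 ≤ c * |g t| ^ p := mul_nonneg hc.le (Real.rpow_nonneg (abs_nonneg _) _)
    linarith
  -- g is strictly monotone
  have hgmono : StrictMono g := by
    apply strictMono_of_deriv_pos
    intro t
    rw [hg_deriv t]
    exact Real.rpow_pos_of_pos (hA t) _
  have hgne : ∀ t : ℝ, t ≠ 0 → g t ≠ 0 := by
    intro t ht
    rcases ht.lt_or_gt with h | h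
    · exact (hgmono h).trans_eq hg_zero |>.ne
    · exact ne_of_gt (hg_zero ▸ hgmono h)
  -- |y|^p = (y^2)^(p/2)
  have habs : ∀ y : ℝ, |y| ^ p = (y ^ 2) ^ (p / 2) := by
    intro y
    rw [← sq_abs y, ← Real.rpow_natCast |y| 2, ← Real.rpow_mul (abs_nonneg y)]
    norm_num
    congr 1
    ring
  have hφ0 : φ 0 = 0 := by rw [hφ 0, hg_zero]; simp
  have hg0val : |g 0| ^ p = 0 := by
    rw [hg_zero, abs_zero]
    exact Real.zero_rpow hp.ne'
  -- the claimed derivative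
  set D : ℝ → ℝ := fun t => 1 + (2 * α - 1) * c * |g t| ^ p / (1 + c * |g t| ^ p) with hD_def
  have hmain : ∀ t : ℝ, HasDerivAt φ (D t) t := by
    intro t
    by_cases ht : t = 0
    · -- at 0, use slope
      subst ht
      have hD0 : D 0 = 1 := by simp [hD_def, hg0val]
      rw [hD0, hasDerivAt_iff_tendsto_slope]
      have hgd : HasDerivAt g 1 0 := by
        have := (hg_diff 0).hasDerivAt
        rwa [hg_deriv 0, hg0val, mul_zero, add_zero, Real.one_rpow] at this
      have hslopeg : Tendsto (slope g 0) (𝓝[≠] 0) (𝓝 1) :=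
        hasDerivAt_iff_tendsto_slope.mp hgd
      have hcont : Tendsto (fun t => (1 + c * |g t| ^ p) ^ ((1 : ℝ) / (N : ℝ)))
          (𝓝[≠] 0) (𝓝 1) := by
        have habscont : ContinuousAt (fun t : ℝ => |g t|) 0 :=
          (continuous_abs.comp hg_diff.continuous).continuousAt
        have h1 : ContinuousAt (fun x : ℝ => x ^ p) (|g 0|) := by
          rw [hg_zero, abs_zero]
          exact Real.continuousAt_rpow_const 0 p (Or.inr hp.le)
        have h2 : ContinuousAt (fun t : ℝ => |g t| ^ p) 0 := h1.tendsto.comp habscont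
        have h3 : ContinuousAt (fun t : ℝ => 1 + c * |g t| ^ p) 0 :=
          continuousAt_const.add (continuousAt_const.mul h2)
        have h4 : ContinuousAt (fun x : ℝ => x ^ ((1 : ℝ) / (N : ℝ))) (1 + c * |g 0| ^ p) :=
          Real.continuousAt_rpow_const _ _ (Or.inl (hA 0).ne')
        have h5 : ContinuousAt (fun t : ℝ => (1 + c * |g t| ^ p) ^ ((1 : ℝ) / (N : ℝ))) 0 :=
          h4.tendsto.comp h3
        have h6 := h5.tendsto
        rw [show (1 + c * |g 0| ^ p) ^ ((1 : ℝ) / (N : ℝ)) = 1 by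
          rw [hg0val, mul_zero, add_zero, Real.one_rpow]] at h6
        exact h6.mono_left nhdsWithin_le_nhds
      have heq : ∀ᶠ s in 𝓝[≠] (0 : ℝ), slope φ 0 s =
          slope g 0 s * (1 + c * |g s| ^ p) ^ ((1 : ℝ) / (N : ℝ)) := by
        filter_upwards [self_mem_nhdsWithin] with s hs
        have hs0 : s ≠ 0 := hs
        rw [slope_def_field, slope_def_field, hφ0, hg_zero, sub_zero, sub_zero, sub_zero,
          hφ s]
        ring
      rw [Filter.tendsto_congr' heq]
      simpa using hslopeg.mul hcont
    · -- at t ≠ 0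
      have hx : g t ≠ 0 := hgne t ht
      have hx2 : g t ^ 2 ≠ 0 := pow_ne_zero 2 hx
      have hgd : HasDerivAt g (deriv g t) t := (hg_diff t).hasDerivAt
      have hsq : HasDerivAt (fun s => g s ^ 2) (2 * g t * deriv g t) t := by
        have := hgd.fun_pow 2
        exact this.congr_deriv (by norm_num)
      have hB : HasDerivAt (fun s => (g s ^ 2) ^ (p / 2))
          ((2 * g t * deriv g t) * (p / 2) * (g t ^ 2) ^ (p / 2 - 1)) t :=
        hsq.rpow_const (Or.inl hx2)
      have hAd : HasDerivAt (fun s => 1 + c * (g s ^ 2) ^ (p / 2))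
          (c * ((2 * g t * deriv g t) * (p / 2) * (g t ^ 2) ^ (p / 2 - 1))) t :=
        (hB.const_mul c).const_add 1
      have hAt : (0 : ℝ) < 1 + c * (g t ^ 2) ^ (p / 2) := by
        rw [← habs]; exact hA t
      have hAr : HasDerivAt (fun s => (1 + c * (g s ^ 2) ^ (p / 2)) ^ ((1 : ℝ) / (N : ℝ)))
          ((c * ((2 * g t * deriv g t) * (p / 2) * (g t ^ 2) ^ (p / 2 - 1))) * ((1 : ℝ) / (N : ℝ))
            * (1 + c * (g t ^ 2) ^ (p / 2)) ^ ((1 : ℝ) / (N : ℝ) - 1)) t :=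
        hAd.rpow_const (Or.inl hAt.ne')
      have hΦ : HasDerivAt (fun s => g s * (1 + c * (g s ^ 2) ^ (p / 2)) ^ ((1 : ℝ) / (N : ℝ)))
          (deriv g t * (1 + c * (g t ^ 2) ^ (p / 2)) ^ ((1 : ℝ) / (N : ℝ)) +
            g t * ((c * ((2 * g t * deriv g t) * (p / 2) * (g t ^ 2) ^ (p / 2 - 1)))
              * ((1 : ℝ) / (N : ℝ))
              * (1 + c * (g t ^ 2) ^ (p / 2)) ^ ((1 : ℝ) / (N : ℝ) - 1))) t :=
        hgd.mul hAr
      have hφΦ : φ = fun s => g s * (1 + c * (g s ^ 2) ^ (p / 2)) ^ ((1 : ℝ) / (N : ℝ)) := by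
        funext s
        rw [hφ s, habs (g s)]
      rw [hφΦ]
      convert hΦ using 1
      -- now the algebraic identity
      set A : ℝ := 1 + c * |g t| ^ p with hA_def
      have hApos : 0 < A := hA t
      have hgt : deriv g t = A ^ (-(1 / (N : ℝ))) := hg_deriv t
      have e1 : deriv g t * A ^ ((1 : ℝ) / (N : ℝ)) = 1 := by
        have hz : -(1 / (N : ℝ)) + 1 / (N : ℝ) = 0 := by ring
        rw [hgt, ← Real.rpow_add hApos, hz, Real.rpow_zero]
      have hsqpos : (0 : ℝ) < g t ^ 2 := by positivity
      have e2 : g t ^ 2 * (g t ^ 2) ^ (p / 2 - 1) = |g t| ^ p := by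
        calc g t ^ 2 * (g t ^ 2) ^ (p / 2 - 1)
            = (g t ^ 2) ^ (1 : ℝ) * (g t ^ 2) ^ (p / 2 - 1) := by rw [Real.rpow_one]
          _ = (g t ^ 2) ^ ((1 : ℝ) + (p / 2 - 1)) := (Real.rpow_add hsqpos _ _).symm
          _ = (g t ^ 2) ^ (p / 2) := by ring_nf
          _ = |g t| ^ p := (habs (g t)).symm
      have e3 : deriv g t * A ^ ((1 : ℝ) / (N : ℝ) - 1) = A⁻¹ := by
        rw [hgt, ← Real.rpow_add hApos, ← Real.rpow_neg_one A]
        congr 1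
        ring
      have e4 : g t * (c * (2 * g t * deriv g t * (p / 2) * (g t ^ 2) ^ (p / 2 - 1))
            * ((1 : ℝ) / (N : ℝ)) * A ^ ((1 : ℝ) / (N : ℝ) - 1)) =
          c * (p / (N : ℝ)) * (g t ^ 2 * (g t ^ 2) ^ (p / 2 - 1))
            * (deriv g t * A ^ ((1 : ℝ) / (N : ℝ) - 1)) := by
        ring
      have hpN : p / (N : ℝ) = 2 * α - 1 := by
        rw [hp_def]
        field_simp
      show D t = _
      rw [← habs (g t), ← hA_def, e1, e4, e2, e3, hpN]
      have hDval : D t = 1 + (2 * α - 1) * c * |g t| ^ p / (1 + c * |g t| ^ p) := rfl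
      rw [hDval, ← hA_def, div_eq_mul_inv]
      ring
  refine ⟨hmain, ?_, ?_⟩
  · intro t
    have hd : deriv φ t = D t := (hmain t).deriv
    have hBnn : 0 ≤ c * |g t| ^ p := mul_nonneg hc.le (Real.rpow_nonneg (abs_nonneg _) _)
    have hApos := hA t
    have habsnn : 0 ≤ (2 * α - 1) * c * |g t| ^ p := by
      have := Real.rpow_nonneg (abs_nonneg (g t)) p
      have h21 : 0 ≤ 2 * α - 1 := by linarith
      positivity
    have hDval : D t = 1 + (2 * α - 1) * c * |g t| ^ p / (1 + c * |g t| ^ p) := rfl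
    constructor
    · rw [hd, hDval]
      have : 0 ≤ (2 * α - 1) * c * |g t| ^ p / (1 + c * |g t| ^ p) :=
        div_nonneg habsnn hApos.le
      linarith
    · rw [hd, hDval]
      have hkey : (2 * α - 1) * c * |g t| ^ p / (1 + c * |g t| ^ p) ≤ 2 * α - 1 := by
        rw [div_le_iff₀ hApos]
        have h21 : 0 ≤ 2 * α - 1 := by linarith
        nlinarith [hBnn]
      linarith
  · intro t
    have hdiff : Differentiable ℝ φ := fun t => (hmain t).differentiableAt
    have h2α : (0 : ℝ) ≤ 2 * α := by linarith
    have hlip : LipschitzWith (⟨2 * α, h2α⟩ : NNReal) φ := by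
      apply lipschitzWith_of_nnnorm_deriv_le hdiff
      intro x
      refine NNReal.coe_le_coe.mp ?_
      rw [coe_nnnorm]
      have hd : deriv φ x = D x := (hmain x).deriv
      have hBnn : 0 ≤ c * |g x| ^ p := mul_nonneg hc.le (Real.rpow_nonneg (abs_nonneg _) _)
      have hApos := hA x
      have habsnn : 0 ≤ (2 * α - 1) * c * |g x| ^ p := by
        have := Real.rpow_nonneg (abs_nonneg (g x)) p
        have h21 : 0 ≤ 2 * α - 1 := by linarith
        positivity
      have hkey : (2 * α - 1) * c * |g x| ^ p / (1 + c * |g x| ^ p) ≤ 2 * α - 1 := by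
        rw [div_le_iff₀ hApos]
        have h21 : 0 ≤ 2 * α - 1 := by linarith
        nlinarith [hBnn]
      have hnn : 0 ≤ (2 * α - 1) * c * |g x| ^ p / (1 + c * |g x| ^ p) :=
        div_nonneg habsnn hApos.le
      have hDval : D x = 1 + (2 * α - 1) * c * |g x| ^ p / (1 + c * |g x| ^ p) := rfl
      change ‖deriv φ x‖ ≤ 2 * α
      rw [hd, hDval, Real.norm_eq_abs, abs_of_nonneg (by linarith)]
      linarith
    have := hlip.dist_le_mul t 0
    rw [hφ0, Real.dist_eq, Real.dist_eq, sub_zero, sub_zero] at this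
    exact_mod_cast this
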